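/- Let k ≥ 0 and M ≥ 0. Let (g_n)_{n≥1} be a square-summable real sequence and define f_n = (Φ(n,φ))^{−1} g_n for all n ≥ 1. If Σ_{n≥1} (1+n²)^k f_n² ≤ M², then ‖f‖ ≤ (D₂ / (B₁(1 − e^{−D₁T})))^{k/(k+2)} · M^{2/(k+2)} · ‖g‖^{k/(k+2)}. -/

import Mathlib

open intervalIntegral MeasureTheory Set

-- Auxiliary: lower bound for Φ-type integral
theorem phi_lower
    (T D₁ D₂ B₁ : ℝ) (hT : 0 < T) (hD₁ : 0 < D₁) (hD₁₂ : D₁ ≤ D₂)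
    (hB₁ : 0 < B₁)
    (a φ : ℝ → ℝ) (ha : ContinuousOn a (Set.Icc 0 T)) (hφc : ContinuousOn φ (Set.Icc 0 T))
    (haB : ∀ t ∈ Set.Icc 0 T, D₁ ≤ a t ∧ a t ≤ D₂)
    (hφB : ∀ t ∈ Set.Icc 0 T, B₁ ≤ φ t)
    (Bf : ℝ → ℝ) (hBf : ∀ t, Bf t = (∫ s in (0:ℝ)..t, a s) - ∫ s in (0:ℝ)..T, a s)
    (m : ℝ) (hm : 1 ≤ m) :
    B₁ * (1 - Real.exp (-D₁ * T)) / (m ^ 2 * D₂)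
      ≤ ∫ t in (0:ℝ)..T, Real.exp (m ^ 2 * Bf t) * φ t := by
  have hT' : (0:ℝ) ≤ T := hT.le
  have huIcc : Set.uIcc (0:ℝ) T = Set.Icc 0 T := Set.uIcc_of_le hT'
  have hD₂ : 0 < D₂ := hD₁.trans_le hD₁₂
  have hm0 : (0:ℝ) ≤ m := by linarith
  have hm2 : (1:ℝ) ≤ m ^ 2 := by nlinarith
  set c : ℝ := m ^ 2 * D₂ with hc_def
  have hc : 0 < c := by positivity
  have hcD₁ : D₁ ≤ c := by nlinarith
  -- integrability of a on subintervals
  have haint : ∀ u v, u ∈ Set.Icc 0 T → v ∈ Set.Icc 0 T →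
      IntervalIntegrable a volume u v := by
    intro u v hu hv
    apply ContinuousOn.intervalIntegrable
    apply ha.mono
    rw [← huIcc]
    exact Set.uIcc_subset_uIcc (huIcc ▸ hu) (huIcc ▸ hv)
  -- Bf lower bound
  have hBflb : ∀ t ∈ Set.Icc (0:ℝ) T, D₂ * (t - T) ≤ Bf t := by
    intro t ht
    have hsplit : (∫ s in (0:ℝ)..t, a s) + (∫ s in t..T, a s) = ∫ s in (0:ℝ)..T, a s :=
      integral_add_adjacent_intervals (haint 0 t (Set.left_mem_Icc.2 hT') ht)
        (haint t T ht (Set.right_mem_Icc.2 hT'))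
    have hmono : (∫ s in t..T, a s) ≤ ∫ s in t..T, (fun _ => D₂) s := by
      apply integral_mono_on ht.2
      · exact haint t T ht (Set.right_mem_Icc.2 hT')
      · exact intervalIntegrable_const
      · intro x hx
        exact (haB x ⟨le_trans ht.1 hx.1, le_trans hx.2 (le_refl T)⟩).2
    rw [intervalIntegral.integral_const, smul_eq_mul] at hmono
    rw [hBf t]
    linarith
  -- pointwise bound
  have hpt : ∀ t ∈ Set.Icc (0:ℝ) T,
      B₁ * Real.exp (c * (t - T)) ≤ Real.exp (m ^ 2 * Bf t) * φ t := by
    intro t ht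
    have h1 : c * (t - T) ≤ m ^ 2 * Bf t := by
      have := hBflb t ht
      calc c * (t - T) = m ^ 2 * (D₂ * (t - T)) := by ring
        _ ≤ m ^ 2 * Bf t := by nlinarith
    calc B₁ * Real.exp (c * (t - T))
        ≤ φ t * Real.exp (m ^ 2 * Bf t) := by
          apply mul_le_mul (hφB t ht) (Real.exp_le_exp.2 h1) (Real.exp_pos _).le
          linarith [hφB t ht]
      _ = Real.exp (m ^ 2 * Bf t) * φ t := mul_comm _ _
  -- continuity of Bf
  have hBfc : ContinuousOn Bf (Set.Icc 0 T) := by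
    have : ContinuousOn (fun x => ∫ s in (0:ℝ)..x, a s) (Set.Icc 0 T) := by
      rw [← huIcc]
      exact intervalIntegral.continuousOn_primitive_interval
        (by rw [huIcc]; exact ha.integrableOn_Icc)
    have h2 : ContinuousOn (fun t => (∫ s in (0:ℝ)..t, a s) - ∫ s in (0:ℝ)..T, a s)
        (Set.Icc 0 T) := this.sub continuousOn_const
    exact h2.congr fun t _ => hBf t
  have hint2 : IntervalIntegrable (fun t => Real.exp (m ^ 2 * Bf t) * φ t) volume 0 T := by
    apply ContinuousOn.intervalIntegrable
    rw [huIcc]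
    exact (Real.continuous_exp.comp_continuousOn (continuousOn_const.mul hBfc)).mul hφc
  have hint1 : IntervalIntegrable (fun t => B₁ * Real.exp (c * (t - T))) volume 0 T :=
    (Continuous.intervalIntegrable (by continuity) 0 T)
  have hcompare : (∫ t in (0:ℝ)..T, B₁ * Real.exp (c * (t - T)))
      ≤ ∫ t in (0:ℝ)..T, Real.exp (m ^ 2 * Bf t) * φ t :=
    integral_mono_on hT' hint1 hint2 hpt
  -- compute left integral
  have hderiv : ∀ t ∈ Set.uIcc (0:ℝ) T,
      HasDerivAt (fun t => B₁ / c * Real.exp (c * (t - T)))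
        (B₁ * Real.exp (c * (t - T))) t := by
    intro t _
    have h1 : HasDerivAt (fun t : ℝ => c * (t - T)) c t := by
      simpa using ((hasDerivAt_id t).sub_const T).const_mul c
    have h2 := (h1.exp).const_mul (B₁ / c)
    refine h2.congr_deriv ?_
    rw [mul_comm (Real.exp (c * (t - T))) c, ← mul_assoc, div_mul_cancel₀ B₁ hc.ne']
  have hcalc : (∫ t in (0:ℝ)..T, B₁ * Real.exp (c * (t - T)))
      = B₁ / c * (1 - Real.exp (-(c * T))) := by
    rw [integral_eq_sub_of_hasDerivAt hderiv hint1]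
    have e1 : c * (T - T) = 0 := by ring
    have e2 : c * ((0:ℝ) - T) = -(c * T) := by ring
    rw [e1, e2, Real.exp_zero]
    ring
  have hexp : Real.exp (-(c * T)) ≤ Real.exp (-D₁ * T) := by
    apply Real.exp_le_exp.2
    nlinarith
  calc B₁ * (1 - Real.exp (-D₁ * T)) / (m ^ 2 * D₂)
      = B₁ / c * (1 - Real.exp (-D₁ * T)) := by rw [← hc_def]; ring
    _ ≤ B₁ / c * (1 - Real.exp (-(c * T))) := by
        apply mul_le_mul_of_nonneg_left (by linarith) (by positivity)
    _ = ∫ t in (0:ℝ)..T, B₁ * Real.exp (c * (t - T)) := hcalc.symm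
    _ ≤ _ := hcompare

theorem stmt_2
    (T D₁ D₂ B₁ B₂ : ℝ) (hT : 0 < T) (hD₁ : 0 < D₁) (hD₁₂ : D₁ ≤ D₂)
    (hB₁ : 0 < B₁) (hB₁₂ : B₁ ≤ B₂)
    (a φ : ℝ → ℝ) (ha : ContinuousOn a (Set.Icc 0 T)) (hφc : ContinuousOn φ (Set.Icc 0 T))
    (haB : ∀ t ∈ Set.Icc 0 T, D₁ ≤ a t ∧ a t ≤ D₂)
    (hφB : ∀ t ∈ Set.Icc 0 T, B₁ ≤ φ t ∧ φ t ≤ B₂)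
    (A Bf : ℝ → ℝ) (hA : ∀ t, A t = ∫ s in (0:ℝ)..t, a s)
    (hBf : ∀ t, Bf t = A t - A T)
    (Φ : ℕ → (ℝ → ℝ) → ℝ)
    (hΦ : ∀ (n : ℕ) (h : ℝ → ℝ), Φ n h = ∫ t in (0:ℝ)..T, Real.exp ((n:ℝ)^2 * Bf t) * h t)
    (k M : ℝ) (hk : 0 ≤ k) (hM : 0 ≤ M)
    (g f : ℕ → ℝ)
    (hgsum : Summable (fun n : ℕ => (g (n+1))^2))
    (hf : ∀ n : ℕ, f (n+1) = (Φ (n+1) φ)⁻¹ * g (n+1))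
    (hwsum : Summable (fun n : ℕ => ((1:ℝ) + ((n:ℝ)+1)^2) ^ k * (f (n+1))^2))
    (hbound : (∑' n : ℕ, ((1:ℝ) + ((n:ℝ)+1)^2) ^ k * (f (n+1))^2) ≤ M^2) :
    Real.sqrt (∑' n : ℕ, (f (n+1))^2) ≤
      (D₂ / (B₁ * (1 - Real.exp (-D₁ * T)))) ^ (k/(k+2)) * M ^ (2/(k+2)) *
        (Real.sqrt (∑' n : ℕ, (g (n+1))^2)) ^ (k/(k+2)) := by
  have hD₂ : 0 < D₂ := hD₁.trans_le hD₁₂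
  have hE : 0 < 1 - Real.exp (-D₁ * T) := by
    have : Real.exp (-D₁ * T) < 1 := Real.exp_lt_one_iff.mpr (by nlinarith)
    linarith
  set E := 1 - Real.exp (-D₁ * T) with hE_def
  set C := D₂ / (B₁ * E) with hC_def
  have hC : 0 < C := by positivity
  -- lower bound on Φ
  have hΦlb : ∀ n : ℕ, B₁ * E / (((n:ℝ)+1) ^ 2 * D₂) ≤ Φ (n+1) φ := by
    intro n
    have h := phi_lower T D₁ D₂ B₁ hT hD₁ hD₁₂ hB₁ a φ ha hφc haB
      (fun t ht => (hφB t ht).1) Bf (fun t => by rw [hBf t, hA t, hA T])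
      ((n:ℝ)+1) (le_add_of_nonneg_left (Nat.cast_nonneg n))
    rw [hΦ]
    push_cast
    exact h
  have hΦpos : ∀ n : ℕ, 0 < Φ (n+1) φ := fun n =>
    lt_of_lt_of_le (by positivity) (hΦlb n)
  -- bound on f in terms of g
  have hfb : ∀ n : ℕ, (f (n+1))^2 ≤ (C * ((n:ℝ)+1)^2)^2 * (g (n+1))^2 := by
    intro n
    have hinv : (Φ (n+1) φ)⁻¹ ≤ C * ((n:ℝ)+1)^2 := by
      have h1 : (Φ (n+1) φ)⁻¹ ≤ (B₁ * E / (((n:ℝ)+1) ^ 2 * D₂))⁻¹ :=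
        inv_anti₀ (by positivity) (hΦlb n)
      have h2 : (B₁ * E / (((n:ℝ)+1) ^ 2 * D₂))⁻¹ = C * ((n:ℝ)+1)^2 := by
        rw [hC_def]
        have hb : (0:ℝ) < B₁ * E := by positivity
        have hn : (0:ℝ) < ((n:ℝ)+1)^2 := by positivity
        field_simp
      linarith
    rw [hf n, mul_pow]
    exact mul_le_mul_of_nonneg_right
      (pow_le_pow_left₀ (inv_nonneg.2 (hΦpos n).le) hinv 2) (sq_nonneg _)
  rcases eq_or_lt_of_le hk with hk0 | hkpos
  · -- k = 0 case
    have hb : (∑' n : ℕ, (f (n+1))^2) ≤ M^2 := by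
      have : ∀ n : ℕ, ((1:ℝ) + ((n:ℝ)+1)^2) ^ k * (f (n+1))^2 = (f (n+1))^2 := by
        intro n
        rw [← hk0, Real.rpow_zero, one_mul]
      rwa [tsum_congr this] at hbound
    have h1 : Real.sqrt (∑' n : ℕ, (f (n+1))^2) ≤ M := by
      calc Real.sqrt (∑' n : ℕ, (f (n+1))^2) ≤ Real.sqrt (M^2) := Real.sqrt_le_sqrt hb
        _ = M := Real.sqrt_sq hM
    rw [← hk0]
    norm_num
    exact h1
  · -- k > 0 case
    set p : ℝ := (k+2)/2 with hp_def
    set q : ℝ := (k+2)/k with hq_def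
    have hk2 : (0:ℝ) < k + 2 := by linarith
    have hp1 : 1 < p := by rw [hp_def, lt_div_iff₀ (by norm_num : (0:ℝ) < 2)]; linarith
    have hp0 : 0 < p := by linarith
    have hq0 : 0 < q := by rw [hq_def]; positivity
    have hpq : Real.HolderConjugate p q := by
      rw [Real.holderConjugate_iff]
      constructor
      · exact hp1
      · rw [hp_def, hq_def]
        field_simp
        ring
    have hinv_p : 1/p = 2/(k+2) := by rw [hp_def]; field_simp
    have hinv_q : 1/q = k/(k+2) := by rw [hq_def]; field_simp
    have hsum_pq : 1/p + 1/q = 1 := by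
      rw [hinv_p, hinv_q, ← add_div, show (2:ℝ)+k = k+2 from by ring,
        div_self hk2.ne']
    set w : ℕ → ℝ := fun n => (1:ℝ) + ((n:ℝ)+1)^2 with hw_def
    have hw : ∀ n, 0 < w n := fun n => by positivity
    set F : ℕ → ℝ := fun n => (w n ^ k * (f (n+1))^2) ^ (1/p) with hF_def
    set G : ℕ → ℝ := fun n => (w n ^ (-2:ℝ) * (f (n+1))^2) ^ (1/q) with hG_def
    have hF0 : ∀ n, 0 ≤ F n := fun n => Real.rpow_nonneg
      (mul_nonneg (Real.rpow_nonneg (hw n).le _) (sq_nonneg _)) _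
    have hG0 : ∀ n, 0 ≤ G n := fun n => Real.rpow_nonneg
      (mul_nonneg (Real.rpow_nonneg (hw n).le _) (sq_nonneg _)) _
    have hFp : ∀ n, F n ^ p = w n ^ k * (f (n+1))^2 := by
      intro n
      simp only [hF_def]
      rw [← Real.rpow_mul
        (mul_nonneg (Real.rpow_nonneg (hw n).le _) (sq_nonneg _)),
        one_div, inv_mul_cancel₀ hp0.ne', Real.rpow_one]
    have hGq : ∀ n, G n ^ q = w n ^ (-2:ℝ) * (f (n+1))^2 := by
      intro n
      simp only [hG_def]
      rw [← Real.rpow_mul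
        (mul_nonneg (Real.rpow_nonneg (hw n).le _) (sq_nonneg _)),
        one_div, inv_mul_cancel₀ hq0.ne', Real.rpow_one]
    have hFG : ∀ n, F n * G n = (f (n+1))^2 := by
      intro n
      simp only [hF_def, hG_def]
      rw [Real.mul_rpow (Real.rpow_nonneg (hw n).le _) (sq_nonneg _),
        Real.mul_rpow (Real.rpow_nonneg (hw n).le _) (sq_nonneg _)]
      have e1 : (w n ^ k) ^ (1/p) * (w n ^ (-2:ℝ)) ^ (1/q) = 1 := by
        rw [← Real.rpow_mul (hw n).le, ← Real.rpow_mul (hw n).le,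
          ← Real.rpow_add (hw n)]
        have : k * (1/p) + (-2) * (1/q) = 0 := by
          rw [hinv_p, hinv_q]; field_simp; ring
        rw [this, Real.rpow_zero]
      have e2 : ((f (n+1))^2) ^ (1/p) * ((f (n+1))^2) ^ (1/q) = (f (n+1))^2 := by
        rw [← Real.rpow_add' (sq_nonneg _) (by rw [hsum_pq]; norm_num), hsum_pq,
          Real.rpow_one]
      calc (w n ^ k) ^ (1/p) * ((f (n+1))^2) ^ (1/p) *
            ((w n ^ (-2:ℝ)) ^ (1/q) * ((f (n+1))^2) ^ (1/q))
          = ((w n ^ k) ^ (1/p) * (w n ^ (-2:ℝ)) ^ (1/q)) *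
            (((f (n+1))^2) ^ (1/p) * ((f (n+1))^2) ^ (1/q)) := by ring
        _ = (f (n+1))^2 := by rw [e1, e2, one_mul]
    have hFpsum : Summable (fun n => F n ^ p) := by
      simp only [hFp]; exact hwsum
    have hGle : ∀ n, G n ^ q ≤ C^2 * (g (n+1))^2 := by
      intro n
      rw [hGq]
      have hwm : w n ^ (-2:ℝ) = (w n ^ 2)⁻¹ := by
        rw [show (-2:ℝ) = -((2:ℕ):ℝ) from by norm_num, Real.rpow_neg (hw n).le,
          Real.rpow_natCast]
      rw [hwm, inv_mul_le_iff₀ (by positivity)]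
      have h1 := hfb n
      simp only [hw_def]
      nlinarith [h1, sq_nonneg (C * (g (n+1))), sq_nonneg ((n:ℝ)+1),
        mul_nonneg (sq_nonneg (C * (g (n+1)))) (sq_nonneg ((n:ℝ)+1))]
    have hGqsum : Summable (fun n => G n ^ q) :=
      Summable.of_nonneg_of_le (fun n => Real.rpow_nonneg (hG0 n) _) hGle
        (hgsum.mul_left (C^2))
    obtain ⟨hfgsum, hholder⟩ :=
      Real.summable_and_inner_le_Lp_mul_Lq_tsum_of_nonneg hpq hF0 hG0 hFpsum hGqsum
    simp only [hFG] at hfgsum hholder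
    have hFtsum : (∑' n, F n ^ p) ≤ M^2 := by
      simp only [hFp]; exact hbound
    have hGtsum : (∑' n, G n ^ q) ≤ C^2 * ∑' n, (g (n+1))^2 := by
      calc (∑' n, G n ^ q) ≤ ∑' n, C^2 * (g (n+1))^2 :=
            Summable.tsum_le_tsum hGle hGqsum (hgsum.mul_left (C^2))
        _ = C^2 * ∑' n, (g (n+1))^2 := tsum_mul_left
    set Sf := ∑' n : ℕ, (f (n+1))^2 with hSf_def
    set Sg := ∑' n : ℕ, (g (n+1))^2 with hSg_def
    have hSf0 : 0 ≤ Sf := tsum_nonneg fun n => sq_nonneg _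
    have hSg0 : 0 ≤ Sg := tsum_nonneg fun n => sq_nonneg _
    have key : Sf ≤ (M^2) ^ (1/p) * (C^2 * Sg) ^ (1/q) := by
      calc Sf ≤ (∑' n, F n ^ p) ^ (1/p) * (∑' n, G n ^ q) ^ (1/q) := hholder
        _ ≤ (M^2) ^ (1/p) * (C^2 * Sg) ^ (1/q) := by
            apply mul_le_mul
            · exact Real.rpow_le_rpow (tsum_nonneg fun n => by
                rw [hFp]; positivity) hFtsum (by positivity)
            · exact Real.rpow_le_rpow (tsum_nonneg fun n =>
                Real.rpow_nonneg (hG0 n) _) hGtsum (by positivity)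
            · exact Real.rpow_nonneg (tsum_nonneg fun n =>
                Real.rpow_nonneg (hG0 n) _) _
            · exact Real.rpow_nonneg (by positivity) _
      
    calc Real.sqrt Sf = Sf ^ ((1:ℝ)/2) := Real.sqrt_eq_rpow Sf
      _ ≤ ((M^2) ^ (1/p) * (C^2 * Sg) ^ (1/q)) ^ ((1:ℝ)/2) :=
          Real.rpow_le_rpow hSf0 key (by norm_num)
      _ = C ^ (k/(k+2)) * M ^ (2/(k+2)) * (Real.sqrt Sg) ^ (k/(k+2)) := by
          rw [Real.sqrt_eq_rpow,
            Real.mul_rpow (Real.rpow_nonneg (by positivity) _)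
              (Real.rpow_nonneg (by positivity) _),
            ← Real.rpow_mul (by positivity : (0:ℝ) ≤ M^2),
            ← Real.rpow_mul (by positivity : (0:ℝ) ≤ C^2 * Sg),
            Real.mul_rpow (by positivity : (0:ℝ) ≤ C^2) hSg0,
            ← Real.rpow_natCast M 2, ← Real.rpow_natCast C 2,
            ← Real.rpow_mul hM, ← Real.rpow_mul hC.le,
            ← Real.rpow_mul hSg0]
          push_cast
          rw [show (2:ℝ) * (1/p * (1/2)) = 2/(k+2) by rw [hinv_p]; ring,
            show (2:ℝ) * (1/q * (1/2)) = k/(k+2) by rw [hinv_q]; ring,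
            show (1:ℝ)/q * (1/2) = 1/2 * (k/(k+2)) by rw [hinv_q]; ring]
          ring
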